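/- Assume C_B is nonempty. Then for every vertex u ∈ V_A ∪ C_B and every vertex v ∈ V_B ∖ C_B, the weighted distance in G satisfies wdist_G(u, v) = min over x ∈ C_B of ( wdist_{G_A′}(u, x) + wdist_{G_B}(x, v) ). -/

import Mathlib

namespace APSPAliceBob

open Classical

variable {V : Type*}

/-- The total weight of a walk: the sum of the weights of its edges. -/
def walkWeight {G : SimpleGraph V} (w : V → V → ℕ) {u v : V} (p : G.Walk u v) : ℕ :=
  (p.darts.map (fun d => w d.toProd.1 d.toProd.2)).sum

/-- The weighted distance between `u` and `v` in `G`: the minimum total edge weight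
of a path in `G` between `u` and `v`. -/
noncomputable def wdist (G : SimpleGraph V) (w : V → V → ℕ) (u v : V) : ℕ :=
  sInf {n : ℕ | ∃ p : G.Walk u v, p.IsPath ∧ walkWeight w p = n}

/-- The subgraph of `G` induced on a set `S` of vertices (kept as a graph on the
same vertex type: vertices outside `S` are isolated). -/
def inducedOn (G : SimpleGraph V) (S : Set V) : SimpleGraph V where
  Adj u v := G.Adj u v ∧ u ∈ S ∧ v ∈ S
  symm := ⟨fun u v ⟨h, hu, hv⟩ => ⟨h.symm, hv, hu⟩⟩
  loopless := ⟨fun u ⟨h, _, _⟩ => h.ne rfl⟩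

/-- `C_B`: the endpoints on the `V_B`-side of the cut edges `E(V_A, V_B)`. -/
def cutB (G : SimpleGraph V) (VA VB : Set V) : Set V :=
  {v : V | v ∈ VB ∧ ∃ u ∈ VA, G.Adj u v}

/-- The virtual graph `G_A′`: its vertices are `V_A ∪ C_B` (all other vertices are
isolated) and its edges are the edges of `G` inside `V_A`, the cut edges
`E(V_A, V_B)`, and all pairs of distinct nodes of `C_B`. -/
def GA' (G : SimpleGraph V) (VA VB : Set V) : SimpleGraph V :=
  SimpleGraph.fromEdgeSet
    {e : Sym2 V | ∃ u v : V, e = s(u, v) ∧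
      ((G.Adj u v ∧ u ∈ VA ∧ v ∈ VA) ∨
       (G.Adj u v ∧ u ∈ VA ∧ v ∈ VB) ∨
       (u ∈ cutB G VA VB ∧ v ∈ cutB G VA VB))}

/-- The weight function of `G_A′`: it agrees with `w` on the edges of `E_A ∪ C`, and
assigns to each pair of distinct nodes of `C_B` their weighted distance in `G_B`. -/
noncomputable def wA' (G : SimpleGraph V) (VA VB : Set V) (w : V → V → ℕ) :
    V → V → ℕ := fun u v =>
  if u ∈ cutB G VA VB ∧ v ∈ cutB G VA VB then
    wdist (inducedOn G VB) w u v
  else w u v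

section Aux

variable {G : SimpleGraph V} {u v x : V} {w : V → V → ℕ}

lemma walkWeight_nil : walkWeight w (SimpleGraph.Walk.nil : G.Walk u u) = 0 := rfl

lemma walkWeight_cons (h : G.Adj u v) (p : G.Walk v x) :
    walkWeight w (SimpleGraph.Walk.cons h p) = w u v + walkWeight w p := by
  simp [walkWeight]

lemma walkWeight_append {y : V} (p : G.Walk u v) (q : G.Walk v y) :
    walkWeight w (p.append q) = walkWeight w p + walkWeight w q := by
  simp [walkWeight, SimpleGraph.Walk.darts_append]

/-- The weighted distance is at most the weight of any walk (not just any path). -/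
lemma wdist_le_walkWeight (w : V → V → ℕ) (p : G.Walk u v) :
    wdist G w u v ≤ walkWeight w p := by
  have hnd : p.bypass.darts.Nodup := by
    have h1 : p.bypass.edges.Nodup := p.bypass_isPath.isTrail.edges_nodup
    rw [SimpleGraph.Walk.edges] at h1
    exact h1.of_map _
  obtain ⟨l, hperm, hsl⟩ := hnd.subperm p.darts_bypass_subset
  have h2 : walkWeight w p.bypass ≤ walkWeight w p := by
    unfold walkWeight
    calc (p.bypass.darts.map (fun d => w d.toProd.1 d.toProd.2)).sum
        = (l.map (fun d => w d.toProd.1 d.toProd.2)).sum := ((hperm.map _).sum_eq).symm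
      _ ≤ _ := List.Sublist.sum_le_sum (hsl.map _) (fun a _ => Nat.zero_le a)
  exact le_trans (Nat.sInf_le ⟨p.bypass, p.bypass_isPath, rfl⟩) h2

/-- If `u` and `v` are connected by some walk, a minimum-weight path exists. -/
lemma exists_wdist_path (w : V → V → ℕ) (p0 : G.Walk u v) :
    ∃ p : G.Walk u v, p.IsPath ∧ walkWeight w p = wdist G w u v :=
  Nat.sInf_mem (⟨_, p0.bypass, p0.bypass_isPath, rfl⟩ :
    {n : ℕ | ∃ p : G.Walk u v, p.IsPath ∧ walkWeight w p = n}.Nonempty)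

lemma exists_walk_of_le {H : SimpleGraph V} (hle : G ≤ H) (w : V → V → ℕ) (p : G.Walk u v) :
    ∃ q : H.Walk u v, walkWeight w q = walkWeight w p := by
  induction p with
  | nil => exact ⟨.nil, rfl⟩
  | cons h p ih =>
    obtain ⟨q, hq⟩ := ih
    exact ⟨.cons (hle h) q, by rw [walkWeight_cons, walkWeight_cons, hq]⟩

lemma inducedOn_le (S : Set V) : inducedOn G S ≤ G := by
  intro a b h; exact h.1

lemma GA'_adj_cases {VA VB : Set V} {a b : V} (h : (GA' G VA VB).Adj a b) :
    G.Adj a b ∨ (a ∈ cutB G VA VB ∧ b ∈ cutB G VA VB) := by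
  rw [GA', SimpleGraph.fromEdgeSet_adj] at h
  obtain ⟨⟨x, y, hxy, hc⟩, hne⟩ := h
  rw [Sym2.eq_iff] at hxy
  rcases hxy with ⟨rfl, rfl⟩ | ⟨rfl, rfl⟩
  · rcases hc with ⟨h, _⟩ | ⟨h, _⟩ | h3
    · exact Or.inl h
    · exact Or.inl h
    · exact Or.inr h3
  · rcases hc with ⟨h, _⟩ | ⟨h, _⟩ | h3
    · exact Or.inl h.symm
    · exact Or.inl h.symm
    · exact Or.inr ⟨h3.2, h3.1⟩

lemma GA'_adj_of_cutB {VA VB : Set V} {a b : V} (ha : a ∈ cutB G VA VB)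
    (hb : b ∈ cutB G VA VB) (hne : a ≠ b) : (GA' G VA VB).Adj a b := by
  rw [GA', SimpleGraph.fromEdgeSet_adj]
  exact ⟨⟨a, b, rfl, Or.inr (Or.inr ⟨ha, hb⟩)⟩, hne⟩

/-- Any walk in the virtual graph `G_A'` can be converted into a walk in `G`
of no greater weight. -/
lemma GA'_walk_to_G {VA VB : Set V}
    (hGBconn : ∀ u ∈ VB, ∀ v ∈ VB, (inducedOn G VB).Reachable u v)
    {a b : V} (p : (GA' G VA VB).Walk a b) :
    ∃ q : G.Walk a b, walkWeight w q ≤ walkWeight (wA' G VA VB w) p := by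
  induction p with
  | nil => exact ⟨.nil, le_rfl⟩
  | @cons a c b h p ih =>
    obtain ⟨q, hq⟩ := ih
    rw [walkWeight_cons]
    by_cases hc : a ∈ cutB G VA VB ∧ c ∈ cutB G VA VB
    · obtain ⟨r0⟩ := hGBconn a hc.1.1 c hc.2.1
      obtain ⟨r, _, hrW⟩ := exists_wdist_path w r0
      obtain ⟨r', hr'⟩ := exists_walk_of_le (inducedOn_le VB) w r
      refine ⟨r'.append q, ?_⟩
      rw [walkWeight_append, hr', hrW]
      have : wA' G VA VB w a c = wdist (inducedOn G VB) w a c := if_pos hc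
      rw [this]
      omega
    · have hadj : G.Adj a c := (GA'_adj_cases h).resolve_right hc
      refine ⟨.cons hadj q, ?_⟩
      rw [walkWeight_cons]
      have : wA' G VA VB w a c = w a c := if_neg hc
      rw [this]
      omega

/-- Key decomposition: every walk in `G` ending in `V_B` can be split into a
virtual-graph part and a `G_B` part of no greater total weight. -/
lemma decomp (G : SimpleGraph V) (VA VB : Set V) (w : V → V → ℕ)
    (hdisj : Disjoint VA VB) (hunion : VA ∪ VB = Set.univ) :
    ∀ {u v : V} (p : G.Walk u v), v ∈ VB →
      ((u ∈ VA → ∃ x ∈ cutB G VA VB, ∃ (p1 : (GA' G VA VB).Walk u x)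
          (p2 : (inducedOn G VB).Walk x v),
          walkWeight (wA' G VA VB w) p1 + walkWeight w p2 ≤ walkWeight w p) ∧
       (u ∈ VB →
        (∃ p2 : (inducedOn G VB).Walk u v, walkWeight w p2 ≤ walkWeight w p) ∨
        (∃ z ∈ cutB G VA VB, ∃ x ∈ cutB G VA VB,
          ∃ (p0 : (inducedOn G VB).Walk u z) (p1 : (GA' G VA VB).Walk z x)
            (p2 : (inducedOn G VB).Walk x v),
          walkWeight w p0 + walkWeight (wA' G VA VB w) p1 + walkWeight w p2
            ≤ walkWeight w p))) := by
  intro u v p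
  induction p with
  | nil =>
    intro hv
    exact ⟨fun hu => absurd hv (Set.disjoint_left.mp hdisj hu),
           fun _ => Or.inl ⟨.nil, le_rfl⟩⟩
  | @cons u u' v h q ih =>
    intro hv
    have ih' := ih hv
    have hu'mem : u' ∈ VA ∨ u' ∈ VB := by
      have : u' ∈ VA ∪ VB := hunion ▸ Set.mem_univ u'
      exact this
    constructor
    · -- u ∈ VA
      intro huA
      have huNCB : u ∉ cutB G VA VB := fun hc => Set.disjoint_left.mp hdisj huA hc.1
      have hwA : wA' G VA VB w u u' = w u u' := if_neg (fun hc => huNCB hc.1)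
      rcases hu'mem with hu'A | hu'B
      · obtain ⟨x, hx, p1, p2, hle⟩ := ih'.1 hu'A
        have hadj : (GA' G VA VB).Adj u u' := by
          rw [GA', SimpleGraph.fromEdgeSet_adj]
          exact ⟨⟨u, u', rfl, Or.inl ⟨h, huA, hu'A⟩⟩, h.ne⟩
        refine ⟨x, hx, .cons hadj p1, p2, ?_⟩
        rw [walkWeight_cons, walkWeight_cons, hwA]
        omega
      · have hu'CB : u' ∈ cutB G VA VB := ⟨hu'B, u, huA, h⟩
        have hadj : (GA' G VA VB).Adj u u' := by
          rw [GA', SimpleGraph.fromEdgeSet_adj]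
          exact ⟨⟨u, u', rfl, Or.inr (Or.inl ⟨h, huA, hu'B⟩)⟩, h.ne⟩
        rcases ih'.2 hu'B with ⟨p2, hle⟩ | ⟨z, hz, x, hx, p0, p1, p2, hle⟩
        · refine ⟨u', hu'CB, .cons hadj .nil, p2, ?_⟩
          rw [walkWeight_cons, walkWeight_cons, hwA]
          have h0 : walkWeight (wA' G VA VB w)
              (SimpleGraph.Walk.nil : (GA' G VA VB).Walk u' u') = 0 := rfl
          omega
        · by_cases hzz : u' = z
          · subst hzz
            refine ⟨x, hx, .cons hadj p1, p2, ?_⟩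
            rw [walkWeight_cons, walkWeight_cons, hwA]
            omega
          · have hadj2 : (GA' G VA VB).Adj u' z := by
              rw [GA', SimpleGraph.fromEdgeSet_adj]
              exact ⟨⟨u', z, rfl, Or.inr (Or.inr ⟨hu'CB, hz⟩)⟩, hzz⟩
            have hwA2 : wA' G VA VB w u' z = wdist (inducedOn G VB) w u' z :=
              if_pos ⟨hu'CB, hz⟩
            have hp0 : wdist (inducedOn G VB) w u' z ≤ walkWeight w p0 :=
              wdist_le_walkWeight w p0
            refine ⟨x, hx, .cons hadj (.cons hadj2 p1), p2, ?_⟩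
            rw [walkWeight_cons, walkWeight_cons, walkWeight_cons, hwA, hwA2]
            omega
    · -- u ∈ VB
      intro huB
      rcases hu'mem with hu'A | hu'B
      · have huCB : u ∈ cutB G VA VB := ⟨huB, u', hu'A, h.symm⟩
        have hu'NCB : u' ∉ cutB G VA VB := fun hc => Set.disjoint_left.mp hdisj hu'A hc.1
        have hwA : wA' G VA VB w u u' = w u u' := if_neg (fun hc => hu'NCB hc.2)
        obtain ⟨x, hx, p1, p2, hle⟩ := ih'.1 hu'A
        have hadj : (GA' G VA VB).Adj u u' := by
          rw [GA', SimpleGraph.fromEdgeSet_adj]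
          exact ⟨⟨u', u, Sym2.eq_swap, Or.inr (Or.inl ⟨h.symm, hu'A, huB⟩)⟩, h.ne⟩
        refine Or.inr ⟨u, huCB, x, hx, .nil, .cons hadj p1, p2, ?_⟩
        rw [walkWeight_cons, walkWeight_cons, hwA]
        have h0 : walkWeight w (SimpleGraph.Walk.nil : (inducedOn G VB).Walk u u) = 0 := rfl
        omega
      · have hadj : (inducedOn G VB).Adj u u' := ⟨h, huB, hu'B⟩
        rcases ih'.2 hu'B with ⟨p2, hle⟩ | ⟨z, hz, x, hx, p0, p1, p2, hle⟩
        · refine Or.inl ⟨.cons hadj p2, ?_⟩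
          rw [walkWeight_cons, walkWeight_cons]
          omega
        · refine Or.inr ⟨z, hz, x, hx, .cons hadj p0, p1, p2, ?_⟩
          rw [walkWeight_cons, walkWeight_cons]
          omega

end Aux

/-- Assume `C_B ≠ ∅`. For every `u ∈ V_A ∪ C_B` and every `v ∈ V_B ∖ C_B`,
`wdist_G(u, v) = min_{x ∈ C_B} ( wdist_{G_A′}(u, x) + wdist_{G_B}(x, v) )`. -/
theorem wdist_eq_min_through_cut [Fintype V] (G : SimpleGraph V) (hconn : G.Connected)
    (w : V → V → ℕ) (hsymm : ∀ u v : V, w u v = w v u)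
    (hpos : ∀ u v : V, G.Adj u v → 0 < w u v)
    (VA VB : Set V) (hdisj : Disjoint VA VB) (hunion : VA ∪ VB = Set.univ)
    (hGBconn : ∀ u ∈ VB, ∀ v ∈ VB, (inducedOn G VB).Reachable u v)
    (hCB : (cutB G VA VB).Nonempty) :
    ∀ u ∈ VA ∪ cutB G VA VB, ∀ v ∈ VB \ cutB G VA VB,
      wdist G w u v =
        sInf ((fun x => wdist (GA' G VA VB) (wA' G VA VB w) u x +
                        wdist (inducedOn G VB) w x v) '' cutB G VA VB) := by
  intro u hu v hv
  have hvB : v ∈ VB := hv.1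
  -- reachability in GA' from u to every vertex of cutB
  have hreach : ∀ x ∈ cutB G VA VB, Nonempty ((GA' G VA VB).Walk u x) := by
    intro x hx
    rcases hu with huA | huCB
    · obtain ⟨p0⟩ := hconn.preconnected u x
      obtain ⟨x', hx', p1, _, _⟩ := (decomp G VA VB w hdisj hunion p0 hx.1).1 huA
      by_cases heq : x' = x
      · exact ⟨heq ▸ p1⟩
      · exact ⟨p1.append (.cons (GA'_adj_of_cutB hx' hx heq) .nil)⟩
    · by_cases heq : u = x
      · exact ⟨heq ▸ .nil⟩
      · exact ⟨.cons (GA'_adj_of_cutB huCB hx heq) .nil⟩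
  have hSne : ((fun x => wdist (GA' G VA VB) (wA' G VA VB w) u x +
      wdist (inducedOn G VB) w x v) '' cutB G VA VB).Nonempty := hCB.image _
  apply le_antisymm
  · -- wdist G ≤ sInf
    obtain ⟨x, hx, hfx⟩ := Nat.sInf_mem hSne
    rw [← hfx]
    obtain ⟨P1⟩ := hreach x hx
    obtain ⟨p1, _, hp1W⟩ := exists_wdist_path (wA' G VA VB w) P1
    obtain ⟨q1, hq1⟩ := GA'_walk_to_G (w := w) hGBconn p1
    obtain ⟨r0⟩ := hGBconn x hx.1 v hvB
    obtain ⟨p2, _, hp2W⟩ := exists_wdist_path w r0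
    obtain ⟨q2, hq2⟩ := exists_walk_of_le (inducedOn_le VB) w p2
    have h1 : wdist G w u v ≤ walkWeight w (q1.append q2) := wdist_le_walkWeight w _
    rw [walkWeight_append] at h1
    simp only []
    omega
  · -- sInf ≤ wdist G
    obtain ⟨P0⟩ := hconn.preconnected u v
    obtain ⟨p, _, hpW⟩ := exists_wdist_path w P0
    have hd := decomp G VA VB w hdisj hunion p hvB
    rcases hu with huA | huCB
    · obtain ⟨x, hx, p1, p2, hle⟩ := hd.1 huA
      have hs : sInf ((fun x => wdist (GA' G VA VB) (wA' G VA VB w) u x +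
          wdist (inducedOn G VB) w x v) '' cutB G VA VB) ≤
          wdist (GA' G VA VB) (wA' G VA VB w) u x + wdist (inducedOn G VB) w x v :=
        Nat.sInf_le ⟨x, hx, rfl⟩
      have h1 := wdist_le_walkWeight (wA' G VA VB w) p1
      have h2 := wdist_le_walkWeight w p2
      omega
    · rcases hd.2 huCB.1 with ⟨p2, hle⟩ | ⟨z, hz, x, hx, p0, p1, p2, hle⟩
      · have hs : sInf ((fun x => wdist (GA' G VA VB) (wA' G VA VB w) u x +
            wdist (inducedOn G VB) w x v) '' cutB G VA VB) ≤
            wdist (GA' G VA VB) (wA' G VA VB w) u u + wdist (inducedOn G VB) w u v :=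
          Nat.sInf_le ⟨u, huCB, rfl⟩
        have h1 : wdist (GA' G VA VB) (wA' G VA VB w) u u ≤ 0 :=
          wdist_le_walkWeight (wA' G VA VB w) (.nil : (GA' G VA VB).Walk u u)
        have h2 := wdist_le_walkWeight w p2
        omega
      · have hs : sInf ((fun x => wdist (GA' G VA VB) (wA' G VA VB w) u x +
            wdist (inducedOn G VB) w x v) '' cutB G VA VB) ≤
            wdist (GA' G VA VB) (wA' G VA VB w) u x + wdist (inducedOn G VB) w x v :=
          Nat.sInf_le ⟨x, hx, rfl⟩
        have h1 : wdist (GA' G VA VB) (wA' G VA VB w) u x ≤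
            walkWeight w p0 + walkWeight (wA' G VA VB w) p1 := by
          by_cases heq : u = z
          · subst heq
            have := wdist_le_walkWeight (wA' G VA VB w) p1
            omega
          · have hadj : (GA' G VA VB).Adj u z := GA'_adj_of_cutB huCB hz heq
            have h3 := wdist_le_walkWeight (wA' G VA VB w) (SimpleGraph.Walk.cons hadj p1)
            rw [walkWeight_cons] at h3
            have h4 : wA' G VA VB w u z = wdist (inducedOn G VB) w u z := if_pos ⟨huCB, hz⟩
            have h5 := wdist_le_walkWeight w p0
            omega
        have h2 := wdist_le_walkWeight w p2
        omega

end APSPAliceBob
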